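/- On ℓ², let (αₙ) be a sequence of positive reals converging to some α > 0, and define A₀(x) = (αₙ xₙ)ₙ and A₁(x) = (αₙ(1 + 1/n) xₙ)ₙ. Then A₀, A₁ are positive definite invertible bounded operators, and the joint image {(⟨A₀x,x⟩, ⟨A₁x,x⟩) : x ∈ ℓ²} is not closed in ℝ²: the point (1,1) is in its closure but not in the set. -/

import Mathlib

open scoped RealInnerProductSpace

lemma diag_hasSum {H : Type*} [NormedAddCommGroup H] [InnerProductSpace ℝ H] [CompleteSpace H]
    (b : HilbertBasis ℕ ℝ H) (A : H →L[ℝ] H) (c : ℕ → ℝ)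
    (hA : ∀ n, A (b n) = c n • b n) (x y : H) :
    HasSum (fun n => c n * (⟪b n, x⟫ * ⟪b n, y⟫)) ⟪A x, y⟫ := by
  have h1 := (b.hasSum_repr x).mapL A
  have h2 := h1.mapL (innerSL ℝ y)
  have heq : (fun n => (innerSL ℝ y) (A (b.repr x n • b n)))
      = fun n => c n * (⟪b n, x⟫ * ⟪b n, y⟫) := by
    funext n
    simp only [innerSL_apply_apply, map_smul, hA, real_inner_smul_right, b.repr_apply_apply,
      smul_eq_mul]
    rw [real_inner_comm (b n) y]
    ring
  rw [heq] at h2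
  have h3 : (innerSL ℝ y) (A x) = ⟪A x, y⟫ := by
    rw [innerSL_apply_apply]; exact real_inner_comm _ _
  rwa [h3] at h2

/-- Example: on a real Hilbert space with Hilbert basis `b : ℕ → H` (modeling `ℓ²`),
given positive reals `α n → a > 0` and diagonal operators `A₀ (b n) = α n • b n`,
`A₁ (b n) = α n (1 + 1/(n+1)) • b n`, the operators `A₀, A₁` are positive definite,
bounded below (hence invertible) bounded operators, yet the joint image is not
closed: `(1,1)` is in its closure but not in the set. -/
theorem joint_image_not_closed_invertible_case
    {H : Type*} [NormedAddCommGroup H] [InnerProductSpace ℝ H] [CompleteSpace H]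
    (b : HilbertBasis ℕ ℝ H)
    (α : ℕ → ℝ) (hαpos : ∀ n, 0 < α n)
    (a : ℝ) (ha : 0 < a)
    (hαlim : Filter.Tendsto α Filter.atTop (nhds a))
    (A₀ A₁ : H →L[ℝ] H)
    (hA₀ : ∀ n, A₀ (b n) = α n • b n)
    (hA₁ : ∀ n, A₁ (b n) = (α n * (1 + 1 / (n + 1 : ℝ))) • b n) :
    (∀ x y : H, ⟪A₀ x, y⟫ = ⟪x, A₀ y⟫) ∧
    (∀ x y : H, ⟪A₁ x, y⟫ = ⟪x, A₁ y⟫) ∧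
    (∀ x : H, x ≠ 0 → 0 < ⟪A₀ x, x⟫) ∧
    (∀ x : H, x ≠ 0 → 0 < ⟪A₁ x, x⟫) ∧
    (∃ δ : ℝ, 0 < δ ∧ ∀ x : H, δ * ‖x‖ ^ 2 ≤ ⟪A₀ x, x⟫) ∧
    (∃ δ : ℝ, 0 < δ ∧ ∀ x : H, δ * ‖x‖ ^ 2 ≤ ⟪A₁ x, x⟫) ∧
    Function.Bijective A₀ ∧ Function.Bijective A₁ ∧
    ((1, 1) ∈ closure {p : ℝ × ℝ | ∃ x : H, p = (⟪A₀ x, x⟫, ⟪A₁ x, x⟫)}) ∧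
    ((1, 1) ∉ {p : ℝ × ℝ | ∃ x : H, p = (⟪A₀ x, x⟫, ⟪A₁ x, x⟫)}) ∧
    ¬ IsClosed {p : ℝ × ℝ | ∃ x : H, p = (⟪A₀ x, x⟫, ⟪A₁ x, x⟫)} := by
  classical
  set c₁ : ℕ → ℝ := fun n => α n * (1 + 1 / (n + 1 : ℝ)) with hc₁def
  have hrec : ∀ n : ℕ, (0:ℝ) < 1 / (n + 1 : ℝ) := by
    intro n; positivity
  have hc₁pos : ∀ n, 0 < c₁ n := by
    intro n
    have := hrec n
    have := hαpos n
    simp only [hc₁def]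
    nlinarith
  have hαc₁ : ∀ n, α n < c₁ n := by
    intro n
    have := hrec n
    have := hαpos n
    simp only [hc₁def]
    nlinarith
  -- Parseval
  have hPars : ∀ x : H, HasSum (fun n => ⟪b n, x⟫ * ⟪b n, x⟫) (‖x‖ ^ 2) := by
    intro x
    have hid : ∀ n : ℕ, (ContinuousLinearMap.id ℝ H) (b n) = (fun _ : ℕ => (1:ℝ)) n • b n := by
      intro n; simp
    have := diag_hasSum b (ContinuousLinearMap.id ℝ H) (fun _ => 1) hid x x
    simpa [real_inner_self_eq_norm_sq] using this
  -- symmetry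
  have symm : ∀ (A : H →L[ℝ] H) (c : ℕ → ℝ), (∀ n, A (b n) = c n • b n) →
      ∀ x y : H, ⟪A x, y⟫ = ⟪x, A y⟫ := by
    intro A c hA x y
    have h1 := diag_hasSum b A c hA x y
    have h2 := diag_hasSum b A c hA y x
    have h3 : ⟪A y, x⟫ = ⟪A x, y⟫ := by
      rw [← h1.tsum_eq, ← h2.tsum_eq]
      congr 1; funext n; ring
    rw [← h3]
    exact real_inner_comm _ _
  -- nonzero coordinate
  have hcoord : ∀ x : H, x ≠ 0 → ∃ n, ⟪b n, x⟫ ≠ 0 := by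
    intro x hx
    by_contra h
    push_neg at h
    apply hx
    have h0 : b.repr x = 0 := lp.eq_zero_iff_coeFn_eq_zero.mpr
      (funext fun n => by rw [b.repr_apply_apply]; exact h n)
    rw [← map_zero b.repr] at h0
    exact b.repr.injective h0
  -- x = 0 from vanishing coordinates
  have hxzero : ∀ x : H, (∀ n, ⟪b n, x⟫ = 0) → x = 0 := by
    intro x h
    by_contra hx
    obtain ⟨n, hn⟩ := hcoord x hx
    exact hn (h n)
  -- positivity
  have pos : ∀ (A : H →L[ℝ] H) (c : ℕ → ℝ), (∀ n, 0 < c n) → (∀ n, A (b n) = c n • b n) →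
      ∀ x : H, x ≠ 0 → 0 < ⟪A x, x⟫ := by
    intro A c hc hA x hx
    obtain ⟨n, hn⟩ := hcoord x hx
    have hs := diag_hasSum b A c hA x x
    rw [← hs.tsum_eq]
    exact Summable.tsum_pos hs.summable
      (fun i => mul_nonneg (hc i).le (mul_self_nonneg _)) n
      (mul_pos (hc n) (mul_self_pos.2 hn))
  -- uniform lower bound δ
  obtain ⟨N, hN⟩ : ∃ N : ℕ, ∀ n ≥ N, a / 2 < α n :=
    Filter.eventually_atTop.mp (hαlim.eventually (eventually_gt_nhds (by linarith)))
  set s : Finset ℝ := insert (a / 2) ((Finset.range N).image α) with hsdef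
  have hsne : s.Nonempty := ⟨a / 2, Finset.mem_insert_self _ _⟩
  set δ : ℝ := s.min' hsne with hδdef
  have hδpos : 0 < δ := by
    rw [hδdef, Finset.lt_min'_iff]
    intro y hy
    rcases Finset.mem_insert.mp hy with h | h
    · rw [h]; linarith
    · obtain ⟨m, _, rfl⟩ := Finset.mem_image.mp h
      exact hαpos m
  have hδle : ∀ n, δ ≤ α n := by
    intro n
    by_cases hn : n < N
    · exact Finset.min'_le _ _ (Finset.mem_insert_of_mem
        (Finset.mem_image_of_mem α (Finset.mem_range.mpr hn)))
    · have h1 : δ ≤ a / 2 := Finset.min'_le _ _ (Finset.mem_insert_self _ _)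
      have h2 := hN n (le_of_not_gt hn)
      linarith
  have hδle₁ : ∀ n, δ ≤ c₁ n := fun n => (hδle n).trans (hαc₁ n).le
  -- coercivity
  have lb : ∀ (A : H →L[ℝ] H) (c : ℕ → ℝ), (∀ n, δ ≤ c n) → (∀ n, A (b n) = c n • b n) →
      ∀ x : H, δ * ‖x‖ ^ 2 ≤ ⟪A x, x⟫ := by
    intro A c hc hA x
    have h1 := (hPars x).mul_left δ
    have h2 := diag_hasSum b A c hA x x
    exact hasSum_le (fun n =>
      mul_le_mul_of_nonneg_right (hc n) (mul_self_nonneg ⟪b n, x⟫)) h1 h2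
  have lb₀ := lb A₀ α hδle hA₀
  have lb₁ := lb A₁ c₁ hδle₁ hA₁
  -- bijectivity
  have bij : ∀ (A : H →L[ℝ] H), (∀ x : H, δ * ‖x‖ ^ 2 ≤ ⟪A x, x⟫) → Function.Bijective A := by
    intro A hcoer
    rw [← ContinuousLinearMap.isUnit_iff_bijective]
    refine ContinuousLinearMap.isUnit_of_forall_le_norm_inner_map A
      (c := ⟨δ, hδpos.le⟩) (by exact_mod_cast hδpos) ?_
    intro x
    rw [Real.norm_eq_abs]
    calc ‖x‖ ^ 2 * ((⟨δ, hδpos.le⟩ : NNReal) : ℝ) = δ * ‖x‖ ^ 2 := by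
          push_cast; ring
      _ ≤ ⟪A x, x⟫ := hcoer x
      _ ≤ |⟪A x, x⟫| := le_abs_self _
  -- points in the set converging to (1,1)
  have hbk : ∀ k : ℕ, ⟪b k, b k⟫ = 1 := by
    intro k
    rw [real_inner_self_eq_norm_sq, b.orthonormal.1 k]
    norm_num
  have hmem : ∀ k : ℕ, ((1 : ℝ), 1 + 1 / (k + 1 : ℝ)) ∈
      {p : ℝ × ℝ | ∃ x : H, p = (⟪A₀ x, x⟫, ⟪A₁ x, x⟫)} := by
    intro k
    set t : ℝ := (Real.sqrt (α k))⁻¹ with htdef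
    have ht : t * t * α k = 1 := by
      rw [htdef, ← mul_inv, Real.mul_self_sqrt (hαpos k).le]
      exact inv_mul_cancel₀ (hαpos k).ne'
    refine ⟨t • b k, ?_⟩
    have e0 : ⟪A₀ (t • b k), t • b k⟫ = 1 := by
      rw [map_smul, hA₀]
      simp only [real_inner_smul_left, real_inner_smul_right, hbk k, smul_eq_mul]
      linear_combination ht
    have e1 : ⟪A₁ (t • b k), t • b k⟫ = 1 + 1 / (k + 1 : ℝ) := by
      rw [map_smul, hA₁]
      simp only [real_inner_smul_left, real_inner_smul_right, hbk k, smul_eq_mul]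
      linear_combination (1 + 1 / (k + 1 : ℝ)) * ht
    show ((1 : ℝ), 1 + 1 / (k + 1 : ℝ)) = _
    rw [Prod.mk.injEq]
    exact ⟨e0.symm, e1.symm⟩
  have hclos : (1, 1) ∈ closure {p : ℝ × ℝ | ∃ x : H, p = (⟪A₀ x, x⟫, ⟪A₁ x, x⟫)} := by
    have h2 : Filter.Tendsto (fun k : ℕ => 1 + 1 / (k + 1 : ℝ)) Filter.atTop (nhds 1) := by
      have := tendsto_one_div_add_atTop_nhds_zero_nat (𝕜 := ℝ)
      simpa using (tendsto_const_nhds (x := (1:ℝ))).add this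
    have htend : Filter.Tendsto (fun k : ℕ => ((1 : ℝ), 1 + 1 / (k + 1 : ℝ)))
        Filter.atTop (nhds ((1 : ℝ), (1 : ℝ))) := tendsto_const_nhds.prodMk_nhds h2
    exact mem_closure_of_tendsto htend (Filter.Eventually.of_forall hmem)
  -- (1,1) not in the set
  have hnotmem : (1, 1) ∉ {p : ℝ × ℝ | ∃ x : H, p = (⟪A₀ x, x⟫, ⟪A₁ x, x⟫)} := by
    rintro ⟨x, hx⟩
    have e0 : (1 : ℝ) = ⟪A₀ x, x⟫ := congrArg Prod.fst hx
    have e1 : (1 : ℝ) = ⟪A₁ x, x⟫ := congrArg Prod.snd hx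
    have h0 := diag_hasSum b A₀ α hA₀ x x
    have h1 := diag_hasSum b A₁ c₁ hA₁ x x
    rw [← e0] at h0
    rw [← e1] at h1
    have hdiff := h1.sub h0
    rw [show (1 : ℝ) - 1 = 0 by norm_num] at hdiff
    have hnn : ∀ n, 0 ≤ c₁ n * (⟪b n, x⟫ * ⟪b n, x⟫) - α n * (⟪b n, x⟫ * ⟪b n, x⟫) := by
      intro n
      have := hαc₁ n
      nlinarith [mul_self_nonneg ⟪b n, x⟫]
    rw [hasSum_zero_iff_of_nonneg hnn] at hdiff
    have hzero : ∀ n, ⟪b n, x⟫ = 0 := by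
      intro n
      have hn := congrFun hdiff n
      simp only [Pi.zero_apply] at hn
      have h2 : (c₁ n - α n) * (⟪b n, x⟫ * ⟪b n, x⟫) = 0 := by linarith [hn]
      have h3 : ⟪b n, x⟫ * ⟪b n, x⟫ = 0 := by
        rcases mul_eq_zero.mp h2 with h | h
        · exact absurd h (by have := hαc₁ n; intro hh; linarith)
        · exact h
      exact mul_self_eq_zero.mp h3
    have hx0 : x = 0 := hxzero x hzero
    rw [hx0] at e0
    simp at e0
  refine ⟨symm A₀ α hA₀, symm A₁ c₁ hA₁, pos A₀ α hαpos hA₀, pos A₁ c₁ hc₁pos hA₁,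
    ⟨δ, hδpos, lb₀⟩, ⟨δ, hδpos, lb₁⟩, bij A₀ lb₀, bij A₁ lb₁, hclos, hnotmem, ?_⟩
  intro hcl
  exact hnotmem (hcl.closure_subset hclos)
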